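/- In the H(S, σ) setting: the set S⁺ = { t ∈ T : σ(w)⁻¹ t σ(w) t⁻¹ ∈ S for all w ∈ W } is a subgroup of T containing S, it satisfies the same two conditions imposed on S (invariance σ(w)⁻¹ S⁺ σ(w) = S⁺ for all w, and σ(v)σ(w)σ(vw)⁻¹ ∈ S⁺ for all v, w), and the normalizer of H(S, σ) in G is exactly H(S⁺, σ); that is, N_G(H(S, σ)) = { σ(w)t : w ∈ W, t ∈ S⁺ }. -/

import Mathlib

/-- The set `H(S, σ) = { σ(w) s : w ∈ W, s ∈ S }` of a full subgroup datum. -/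
def fullSet {G : Type*} [Group G] (T : Subgroup G) (σ : G ⧸ T → G) (S : Set G) : Set G :=
  {g : G | ∃ w : G ⧸ T, ∃ s ∈ S, g = σ w * s}

/-- The set `S⁺ = { t ∈ T : σ(w)⁻¹ t σ(w) t⁻¹ ∈ S for all w ∈ W }`. -/
def splusSet {G : Type*} [Group G] (T : Subgroup G) (σ : G ⧸ T → G) (S : Subgroup G) :
    Set G :=
  {t : G | t ∈ T ∧ ∀ w : G ⧸ T, (σ w)⁻¹ * t * σ w * t⁻¹ ∈ S}

/-- In the `H(S, σ)` setting (`T` an abelian normal subgroup of `G`,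
`W = G/T`, `σ` a set-theoretic section of the projection `π : G → W`, and `S ≤ T` a
subgroup satisfying `σ(w)⁻¹ S σ(w) = S` and the cocycle condition
`σ(v)σ(w)σ(vw)⁻¹ ∈ S`): the set `S⁺` is a subgroup of `T` containing `S`, it satisfies
the same two conditions as `S`, and the normalizer of `H(S, σ)` in `G` is exactly
`H(S⁺, σ)`. -/
theorem splus_subgroup_and_normalizer
    {G : Type*} [Group G] (T : Subgroup G) [T.Normal]
    (hTab : ∀ a b : G, a ∈ T → b ∈ T → a * b = b * a)
    (σ : G ⧸ T → G) (hσ : ∀ w : G ⧸ T, (QuotientGroup.mk (σ w) : G ⧸ T) = w)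
    (S : Subgroup G) (hST : S ≤ T)
    (hSinv : ∀ w : G ⧸ T, ∀ s : G, s ∈ S → (σ w)⁻¹ * s * σ w ∈ S)
    (hSinv' : ∀ w : G ⧸ T, ∀ s : G, s ∈ S → σ w * s * (σ w)⁻¹ ∈ S)
    (hcoc : ∀ v w : G ⧸ T, σ v * σ w * (σ (v * w))⁻¹ ∈ S)
    (HS : Subgroup G) (hHS : (HS : Set G) = fullSet T σ (S : Set G)) :
    -- `S⁺` is a subgroup of `T` containing `S`:
    ((1 : G) ∈ splusSet T σ S ∧
      (∀ a b : G, a ∈ splusSet T σ S → b ∈ splusSet T σ S → a * b ∈ splusSet T σ S) ∧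
      (∀ a : G, a ∈ splusSet T σ S → a⁻¹ ∈ splusSet T σ S) ∧
      (∀ s : G, s ∈ S → s ∈ splusSet T σ S) ∧
      (∀ t : G, t ∈ splusSet T σ S → t ∈ T)) ∧
    -- `S⁺` satisfies the same invariance and cocycle conditions:
    ((∀ w : G ⧸ T, ∀ t : G, t ∈ splusSet T σ S → (σ w)⁻¹ * t * σ w ∈ splusSet T σ S) ∧
      (∀ w : G ⧸ T, ∀ t : G, t ∈ splusSet T σ S → σ w * t * (σ w)⁻¹ ∈ splusSet T σ S) ∧
      (∀ v w : G ⧸ T, σ v * σ w * (σ (v * w))⁻¹ ∈ splusSet T σ S)) ∧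
    -- the normalizer of `H(S, σ)` is `H(S⁺, σ)`:
    (Subgroup.normalizer (HS : Set G) : Set G) = fullSet T σ (splusSet T σ S) := by
  have hN : T.Normal := inferInstance
  -- conjugation of elements of `T` only depends on the coset
  have hconjT : ∀ t : G, t ∈ T → ∀ g : G, g⁻¹ * t * g ∈ T := by
    intro t ht g
    simpa using hN.conj_mem t ht g⁻¹
  have hconj : ∀ t : G, t ∈ T → ∀ g g' : G,
      (QuotientGroup.mk g : G ⧸ T) = QuotientGroup.mk g' →
      g⁻¹ * t * g = g'⁻¹ * t * g' := by
    intro t ht g g' hgg'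
    have hu : g⁻¹ * g' ∈ T := (QuotientGroup.eq.mp hgg')
    have h2 : (g⁻¹ * t * g) * (g⁻¹ * g') = (g⁻¹ * g') * (g⁻¹ * t * g) :=
      hTab _ _ (hconjT t ht g) hu
    symm
    calc g'⁻¹ * t * g'
        = (g⁻¹ * g')⁻¹ * ((g⁻¹ * t * g) * (g⁻¹ * g')) := by group
      _ = (g⁻¹ * g')⁻¹ * ((g⁻¹ * g') * (g⁻¹ * t * g)) := by rw [h2]
      _ = g⁻¹ * t * g := by group
  -- the key characterization of `S⁺`
  have hchar : ∀ t : G, t ∈ splusSet T σ S → ∀ g : G, g⁻¹ * t * g * t⁻¹ ∈ S := by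
    intro t ht g
    obtain ⟨htT, hts⟩ := ht
    have h := hconj t htT g (σ (QuotientGroup.mk g)) (by rw [hσ])
    rw [h]
    exact hts _
  -- subgroup properties of `S⁺`
  have hone : (1 : G) ∈ splusSet T σ S := by
    refine ⟨T.one_mem, fun w => ?_⟩
    simpa using S.one_mem
  have hmul : ∀ a b : G, a ∈ splusSet T σ S → b ∈ splusSet T σ S →
      a * b ∈ splusSet T σ S := by
    intro a b ha hb
    refine ⟨T.mul_mem ha.1 hb.1, fun w => ?_⟩
    have h3 : a * ((σ w)⁻¹ * b * σ w * b⁻¹) * a⁻¹ = (σ w)⁻¹ * b * σ w * b⁻¹ := by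
      rw [hTab a _ ha.1 (hST (hb.2 w))]
      group
    have key : (σ w)⁻¹ * (a * b) * σ w * (a * b)⁻¹
        = ((σ w)⁻¹ * a * σ w * a⁻¹) * (a * ((σ w)⁻¹ * b * σ w * b⁻¹) * a⁻¹) := by
      group
    rw [key, h3]
    exact S.mul_mem (ha.2 w) (hb.2 w)
  have hinv : ∀ a : G, a ∈ splusSet T σ S → a⁻¹ ∈ splusSet T σ S := by
    intro a ha
    refine ⟨T.inv_mem ha.1, fun w => ?_⟩
    have h3 : a⁻¹ * ((σ w)⁻¹ * a * σ w * a⁻¹)⁻¹ * a = ((σ w)⁻¹ * a * σ w * a⁻¹)⁻¹ := by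
      rw [hTab a⁻¹ _ (T.inv_mem ha.1) (hST (S.inv_mem (ha.2 w)))]
      group
    have key : (σ w)⁻¹ * a⁻¹ * σ w * a⁻¹⁻¹
        = a⁻¹ * ((σ w)⁻¹ * a * σ w * a⁻¹)⁻¹ * a := by group
    rw [key, h3]
    exact S.inv_mem (ha.2 w)
  have hSsub : ∀ s : G, s ∈ S → s ∈ splusSet T σ S := by
    intro s hs
    exact ⟨hST hs, fun w => S.mul_mem (hSinv w s hs) (S.inv_mem hs)⟩
  -- stability of `S⁺` under conjugation by any element
  have hstab : ∀ h : G, ∀ t : G, t ∈ splusSet T σ S → h⁻¹ * t * h ∈ splusSet T σ S := by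
    intro h t ht
    refine ⟨hconjT t ht.1 h, fun w => ?_⟩
    have h1 : (h * σ w)⁻¹ * t * (h * σ w) * t⁻¹ ∈ S := hchar t ht (h * σ w)
    have h2 : h⁻¹ * t * h * t⁻¹ ∈ S := hchar t ht h
    have key : (σ w)⁻¹ * (h⁻¹ * t * h) * σ w * (h⁻¹ * t * h)⁻¹
        = ((h * σ w)⁻¹ * t * (h * σ w) * t⁻¹) * (h⁻¹ * t * h * t⁻¹)⁻¹ := by group
    rw [key]
    exact S.mul_mem h1 (S.inv_mem h2)
  -- membership criterion for `fullSet`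
  have hmkmem : ∀ w : G ⧸ T, ∀ t : G, t ∈ T →
      (QuotientGroup.mk (σ w * t) : G ⧸ T) = w := by
    intro w t htT
    rw [QuotientGroup.mk_mul, hσ, (QuotientGroup.eq_one_iff t).mpr htT, mul_one]
  have hmkGen : ∀ A : Set G, (∀ x ∈ A, x ∈ T) → ∀ g : G,
      (g ∈ fullSet T σ A ↔ (σ (QuotientGroup.mk g))⁻¹ * g ∈ A) := by
    intro A hA g
    constructor
    · rintro ⟨w, s, hs, rfl⟩
      rw [hmkmem w s (hA s hs)]
      simpa [mul_assoc] using hs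
    · intro h
      exact ⟨QuotientGroup.mk g, (σ (QuotientGroup.mk g))⁻¹ * g, h, by group⟩
  have hHSmem : ∀ g : G, g ∈ HS ↔ (σ (QuotientGroup.mk g))⁻¹ * g ∈ S := by
    intro g
    rw [← SetLike.mem_coe, hHS]
    exact hmkGen (S : Set G) (fun x hx => hST hx) g
  have hσmem : ∀ v : G ⧸ T, σ v ∈ HS := by
    intro v
    rw [hHSmem, hσ]
    simpa using S.one_mem
  -- `S⁺` conjugates `HS` into itself
  have hconjHS : ∀ t : G, t ∈ splusSet T σ S → ∀ h : G, h ∈ HS → t * h * t⁻¹ ∈ HS := by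
    intro t ht h hh
    have hs : (σ (QuotientGroup.mk h))⁻¹ * h ∈ S := (hHSmem h).mp hh
    have hmk1 : (QuotientGroup.mk t : G ⧸ T) = 1 := (QuotientGroup.eq_one_iff t).mpr ht.1
    have hmkth : (QuotientGroup.mk (t * h * t⁻¹) : G ⧸ T) = QuotientGroup.mk h := by
      simp [QuotientGroup.mk_mul, hmk1]
    rw [hHSmem, hmkth]
    set v := (QuotientGroup.mk h : G ⧸ T) with hv
    have hcomm : ((σ v)⁻¹ * h) * t⁻¹ = t⁻¹ * ((σ v)⁻¹ * h) :=
      hTab _ _ (hST hs) (T.inv_mem ht.1)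
    have key : (σ v)⁻¹ * (t * h * t⁻¹)
        = ((σ v)⁻¹ * t * σ v * t⁻¹) * ((σ v)⁻¹ * h) := by
      calc (σ v)⁻¹ * (t * h * t⁻¹)
          = ((σ v)⁻¹ * t * σ v) * (((σ v)⁻¹ * h) * t⁻¹) := by group
        _ = ((σ v)⁻¹ * t * σ v) * (t⁻¹ * ((σ v)⁻¹ * h)) := by rw [hcomm]
        _ = ((σ v)⁻¹ * t * σ v * t⁻¹) * ((σ v)⁻¹ * h) := by group
    rw [key]
    exact S.mul_mem (ht.2 v) hs
  have htN : ∀ t : G, t ∈ splusSet T σ S → t ∈ Subgroup.normalizer (HS : Set G) := by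
    intro t ht
    rw [Subgroup.mem_normalizer_iff]
    intro h
    constructor
    · exact hconjHS t ht h
    · intro hth
      have h2 := hconjHS t⁻¹ (hinv t ht) _ hth
      have e : t⁻¹ * (t * h * t⁻¹) * t⁻¹⁻¹ = h := by group
      rwa [e] at h2
  refine ⟨⟨hone, hmul, hinv, hSsub, fun t ht => ht.1⟩,
    ⟨fun w t ht => hstab (σ w) t ht,
     fun w t ht => by simpa using hstab (σ w)⁻¹ t ht,
     fun v w => hSsub _ (hcoc v w)⟩, ?_⟩
  ext g
  constructor
  · intro hg
    have hgN : g ∈ Subgroup.normalizer (HS : Set G) := hg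
    set w := (QuotientGroup.mk g : G ⧸ T) with hw
    have htT : (σ w)⁻¹ * g ∈ T := by
      rw [← QuotientGroup.eq_one_iff]
      rw [QuotientGroup.mk_mul, QuotientGroup.mk_inv, hσ, ← hw]
      simp
    have htN' : (σ w)⁻¹ * g ∈ Subgroup.normalizer (HS : Set G) :=
      (Subgroup.normalizer (HS : Set G)).mul_mem ((Subgroup.normalizer (HS : Set G)).inv_mem (Subgroup.le_normalizer (hσmem w))) hgN
    refine ⟨w, (σ w)⁻¹ * g, ⟨htT, fun v => ?_⟩, by group⟩
    set t := (σ w)⁻¹ * g with hts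
    have h1 : t * σ v * t⁻¹ ∈ HS :=
      (Subgroup.mem_normalizer_iff.mp htN' (σ v)).mp (hσmem v)
    have hmk1 : (QuotientGroup.mk t : G ⧸ T) = 1 := (QuotientGroup.eq_one_iff t).mpr htT
    have hmkv : (QuotientGroup.mk (t * σ v * t⁻¹) : G ⧸ T) = v := by
      simp [QuotientGroup.mk_mul, hmk1, hσ]
    have h2 := (hHSmem _).mp h1
    rw [hmkv] at h2
    have e : (σ v)⁻¹ * (t * σ v * t⁻¹) = (σ v)⁻¹ * t * σ v * t⁻¹ := by group
    rwa [e] at h2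
  · rintro ⟨w, t, ht, rfl⟩
    exact (Subgroup.normalizer (HS : Set G)).mul_mem (Subgroup.le_normalizer (hσmem w)) (htN t ht)
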